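/- Let y₁, p, q be real numbers with p² < 4q, let μ = √(y₁² + p·y₁ + q) and k² = (1/2)·(1 − (y₁ + p/2)/μ), and define the incomplete Legendre elliptic integral F(φ, k) = ∫₀^φ dχ/√(1 − k²·sin²χ). Then 0 < k² < 1, and for all real a, b with y₁ ≤ a ≤ b, ∫ₐᵇ dy/√(4(y − y₁)(y² + p·y + q)) = (1/(2√μ))·(F(2·arctan √((b − y₁)/μ), k) − F(2·arctan √((a − y₁)/μ), k)). -/

import Mathlib

set_option maxHeartbeats 1000000

open Real MeasureTheory Set intervalIntegral

/-- The incomplete Legendre elliptic integral of the first kind,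
`F(φ, k) = ∫₀^φ dχ/√(1 − k² sin²χ)`, parametrized by `m = k²`. -/
noncomputable def legendreF (m φ : ℝ) : ℝ :=
  ∫ χ in (0 : ℝ)..φ, 1 / Real.sqrt (1 - m * Real.sin χ ^ 2)

/-- Reduction of the Weierstrass-form integral `∫ dy/√(4(y−y₁)(y²+py+q))`, in the case
of a single real root `y₁` (i.e. `p² < 4q`), to a difference of incomplete Legendre
elliptic integrals with modulus `k² = (1/2)(1 − (y₁ + p/2)/μ)`, `μ = √(y₁² + py₁ + q)`. -/
theorem weierstrass_integral_one_real_root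
    (y₁ p q : ℝ) (hpq : p ^ 2 < 4 * q)
    (μ : ℝ) (hμ : μ = Real.sqrt (y₁ ^ 2 + p * y₁ + q))
    (k2 : ℝ) (hk2 : k2 = (1 / 2) * (1 - (y₁ + p / 2) / μ)) :
    (0 < k2 ∧ k2 < 1)
      ∧ ∀ a b : ℝ, y₁ ≤ a → a ≤ b →
        (∫ y in a..b, 1 / Real.sqrt (4 * (y - y₁) * (y ^ 2 + p * y + q)))
          = (1 / (2 * Real.sqrt μ)) *
            (legendreF k2 (2 * Real.arctan (Real.sqrt ((b - y₁) / μ)))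
              - legendreF k2 (2 * Real.arctan (Real.sqrt ((a - y₁) / μ)))) := by
  have hπ := Real.pi_pos
  have hquadpos : ∀ y : ℝ, 0 < y ^ 2 + p * y + q := by
    intro y; nlinarith [sq_nonneg (y + p / 2)]
  have hμpos : 0 < μ := hμ ▸ Real.sqrt_pos.mpr (hquadpos y₁)
  have hμsq : μ ^ 2 = y₁ ^ 2 + p * y₁ + q := by
    rw [hμ]; exact Real.sq_sqrt (hquadpos y₁).le
  set c : ℝ := (y₁ + p / 2) / μ with hc
  have hcμ : c * μ = y₁ + p / 2 := div_mul_cancel₀ _ hμpos.ne'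
  have hcsq : c ^ 2 < 1 := by
    rw [hc, div_pow, div_lt_one (by positivity)]
    nlinarith
  have hc1 : c < 1 := by nlinarith
  have hc2 : -1 < c := by nlinarith
  have hk2' : k2 = (1 - c) / 2 := by rw [hk2, hc]; ring
  have hk2pos : 0 < k2 := by rw [hk2']; linarith
  have hk2lt : k2 < 1 := by rw [hk2']; linarith
  refine ⟨⟨hk2pos, hk2lt⟩, ?_⟩
  intro a b ha hab
  -- the Legendre integrand
  set h : ℝ → ℝ := fun χ => 1 / Real.sqrt (1 - k2 * Real.sin χ ^ 2) with hh
  have hpos1 : ∀ χ : ℝ, 0 < 1 - k2 * Real.sin χ ^ 2 := by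
    intro χ
    nlinarith [Real.sin_sq_le_one χ, sq_nonneg (Real.sin χ)]
  have hcont : Continuous h := by
    apply continuous_const.div
    · exact (continuous_const.sub (continuous_const.mul
        ((Real.continuous_sin).pow 2))).sqrt
    · intro χ; exact (Real.sqrt_pos.mpr (hpos1 χ)).ne'
  -- the substitution map
  set g : ℝ → ℝ := fun χ => y₁ + μ * Real.tan (χ / 2) ^ 2 with hg
  set g' : ℝ → ℝ := fun χ => μ * (Real.tan (χ / 2) * (1 / Real.cos (χ / 2) ^ 2)) with hg'
  set φa : ℝ := 2 * Real.arctan (Real.sqrt ((a - y₁) / μ)) with hφa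
  set φb : ℝ := 2 * Real.arctan (Real.sqrt ((b - y₁) / μ)) with hφb
  have harct_nonneg : ∀ x : ℝ, 0 ≤ Real.arctan (Real.sqrt x) := by
    intro x
    have := Real.arctan_strictMono.monotone (Real.sqrt_nonneg x)
    simpa [Real.arctan_zero] using this
  have h0φa : 0 ≤ φa := by
    have := harct_nonneg ((a - y₁) / μ); rw [hφa]; linarith
  have hφbπ : φb < π := by
    have := Real.arctan_lt_pi_div_two (Real.sqrt ((b - y₁) / μ)); rw [hφb]; linarith
  have hφaφb : φa ≤ φb := by
    have h1 : (a - y₁) / μ ≤ (b - y₁) / μ := by gcongr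
    have h2 := Real.arctan_strictMono.monotone (Real.sqrt_le_sqrt h1)
    rw [hφa, hφb]; linarith
  -- g inverts the substitution angle
  have hgφ : ∀ y : ℝ, y₁ ≤ y → g (2 * Real.arctan (Real.sqrt ((y - y₁) / μ))) = y := by
    intro y hy
    have hnn : 0 ≤ (y - y₁) / μ := div_nonneg (by linarith) hμpos.le
    simp only [hg]
    rw [show 2 * Real.arctan (Real.sqrt ((y - y₁) / μ)) / 2
          = Real.arctan (Real.sqrt ((y - y₁) / μ)) by ring,
        Real.tan_arctan, Real.sq_sqrt hnn]
    field_simp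
    ring
  have hga : g φa = a := hgφ a ha
  have hgb : g φb = b := hgφ b (le_trans ha hab)
  -- g strictly monotone on [0, π)
  have hgmono : ∀ u v : ℝ, 0 ≤ u → u < v → v < π → g u < g v := by
    intro u v hu huv hv
    have h2 : Real.tan (u / 2) < Real.tan (v / 2) :=
      Real.tan_lt_tan_of_nonneg_of_lt_pi_div_two (by linarith) (by linarith) (by linarith)
    have h3 : 0 ≤ Real.tan (u / 2) :=
      Real.tan_nonneg_of_nonneg_of_le_pi_div_two (by linarith) (by linarith)
    have h4 : Real.tan (u / 2) ^ 2 < Real.tan (v / 2) ^ 2 := by nlinarith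
    simp only [hg]
    linarith [mul_lt_mul_of_pos_left h4 hμpos]
  -- continuity of g on [φa, φb]
  have hgcont : ContinuousOn g (Icc φa φb) := by
    intro χ hχ
    have hχ0 : 0 ≤ χ := le_trans h0φa hχ.1
    have hχπ : χ < π := lt_of_le_of_lt hχ.2 hφbπ
    have hcos : Real.cos (χ / 2) ≠ 0 :=
      (Real.cos_pos_of_mem_Ioo ⟨by linarith, by linarith⟩).ne'
    have htanCA : ContinuousAt Real.tan (χ / 2) := Real.continuousAt_tan.mpr hcos
    have hhalf : ContinuousAt (fun x : ℝ => x / 2) χ := (continuous_id.div_const 2).continuousAt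
    have hcomp : ContinuousAt (fun x : ℝ => Real.tan (x / 2)) χ :=
      ContinuousAt.comp (f := fun x : ℝ => x / 2) htanCA hhalf
    exact (continuousAt_const.add (continuousAt_const.mul
      (hcomp.pow 2))).continuousWithinAt
  -- image equality
  have himage : g '' Ioo φa φb = Ioo a b := by
    apply Subset.antisymm
    · rintro y ⟨χ, hχ, rfl⟩
      have h1 : g φa < g χ := hgmono φa χ h0φa hχ.1 (lt_trans hχ.2 hφbπ)
      have h2 : g χ < g φb := hgmono χ φb (le_trans h0φa hχ.1.le) hχ.2 hφbπ
      rw [hga] at h1; rw [hgb] at h2; exact ⟨h1, h2⟩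
    · have hIV := intermediate_value_Ioo hφaφb hgcont
      rw [hga, hgb] at hIV; exact hIV
  -- derivative of g
  have hderiv : ∀ χ ∈ Ioo φa φb, HasDerivWithinAt g (g' χ) (Ioo φa φb) χ := by
    intro χ hχ
    have hχ0 : 0 < χ := lt_of_le_of_lt h0φa hχ.1
    have hχπ : χ < π := lt_trans hχ.2 hφbπ
    have hcos : Real.cos (χ / 2) ≠ 0 :=
      (Real.cos_pos_of_mem_Ioo ⟨by linarith, by linarith⟩).ne'
    have h1 : HasDerivAt (fun x : ℝ => x / 2) (1 / 2 : ℝ) χ := by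
      simpa using (hasDerivAt_id χ).div_const 2
    have h2 : HasDerivAt (fun x : ℝ => Real.tan (x / 2))
        (1 / Real.cos (χ / 2) ^ 2 * (1 / 2)) χ :=
      by have := (Real.hasDerivAt_tan hcos).comp χ h1; exact this
    have h3 := (h2.pow 2).const_mul μ
    have h4 := h3.const_add y₁
    have h5 : HasDerivAt g (g' χ) χ := by
      convert (show HasDerivAt g _ χ from h4) using 1
      simp only [hg']
      ring
    exact h5.hasDerivWithinAt
  -- injectivity of g
  have hinj : InjOn g (Ioo φa φb) := by
    intro u hu v hv huv
    by_contra hne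
    rcases lt_or_gt_of_ne hne with hlt | hlt
    · exact absurd huv
        (ne_of_lt (hgmono u v (le_trans h0φa hu.1.le) hlt (lt_trans hv.2 hφbπ)))
    · exact absurd huv.symm
        (ne_of_lt (hgmono v u (le_trans h0φa hv.1.le) hlt (lt_trans hu.2 hφbπ)))
  -- pointwise identity for the substituted integrand
  have hpoint : EqOn
      (fun x => |g' x| • (1 / Real.sqrt (4 * (g x - y₁) * ((g x) ^ 2 + p * (g x) + q))))
      (fun x => (1 / (2 * Real.sqrt μ)) * h x) (Ioo φa φb) := by
    intro χ hχ
    have hχ0 : 0 < χ := lt_of_le_of_lt h0φa hχ.1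
    have hχπ : χ < π := lt_trans hχ.2 hφbπ
    set t := Real.tan (χ / 2) with htdef
    have hcos : 0 < Real.cos (χ / 2) :=
      Real.cos_pos_of_mem_Ioo ⟨by linarith, by linarith⟩
    have ht : 0 < t :=
      Real.tan_pos_of_pos_of_lt_pi_div_two (by linarith) (by linarith)
    have hct : Real.cos (χ / 2) ^ 2 = (1 + t ^ 2)⁻¹ :=
      (Real.inv_one_add_tan_sq hcos.ne').symm
    have hsin : Real.sin χ = 2 * t * Real.cos (χ / 2) ^ 2 := by
      have h2 := Real.sin_two_mul (χ / 2)
      rw [show 2 * (χ / 2) = χ by ring] at h2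
      rw [h2, htdef, Real.tan_eq_sin_div_cos]
      field_simp
    set D := t ^ 4 + 2 * c * t ^ 2 + 1 with hD
    have hDpos : 0 < D := by nlinarith [sq_nonneg (t ^ 2 + c)]
    have hgval : g χ = y₁ + μ * t ^ 2 := by simp only [hg, ← htdef]
    have hinner : 4 * (g χ - y₁) * ((g χ) ^ 2 + p * (g χ) + q)
        = (2 * μ * t) ^ 2 * (μ * D) := by
      rw [hgval, hD]
      linear_combination (-(4 * μ * t ^ 2)) * hμsq + (-(8 * μ ^ 2 * t ^ 4)) * hcμ
    have hsqrt_inner : Real.sqrt (4 * (g χ - y₁) * ((g χ) ^ 2 + p * (g χ) + q))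
        = 2 * μ * t * (Real.sqrt μ * Real.sqrt D) := by
      rw [hinner, Real.sqrt_mul (sq_nonneg _), Real.sqrt_sq (by positivity),
        Real.sqrt_mul hμpos.le]
    have hsin2 : 1 - k2 * Real.sin χ ^ 2 = D / (1 + t ^ 2) ^ 2 := by
      rw [hsin, hct, hk2', hD]
      field_simp
      ring
    have hhχ : h χ = (1 + t ^ 2) / Real.sqrt D := by
      simp only [hh]
      rw [hsin2, Real.sqrt_div hDpos.le, Real.sqrt_sq (by positivity), one_div_div]
    have hg'val : |g' χ| = μ * t * (1 + t ^ 2) := by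
      have hge : g' χ = μ * (t * (1 + t ^ 2)) := by
        simp only [hg', ← htdef, hct, one_div, inv_inv]
      rw [hge, abs_of_pos (by positivity)]
      ring
    have hsD : 0 < Real.sqrt D := Real.sqrt_pos.mpr hDpos
    have hsμ : 0 < Real.sqrt μ := Real.sqrt_pos.mpr hμpos
    have hμs : Real.sqrt μ * Real.sqrt μ = μ := Real.mul_self_sqrt hμpos.le
    simp only [smul_eq_mul]
    rw [hsqrt_inner, hg'val, hhχ]
    field_simp
  -- assembling the integral computation
  have hint1 : IntervalIntegrable h volume 0 φb := hcont.intervalIntegrable _ _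
  have hint2 : IntervalIntegrable h volume 0 φa := hcont.intervalIntegrable _ _
  have hFd : legendreF k2 φb - legendreF k2 φa = ∫ χ in φa..φb, h χ := by
    show (∫ χ in (0:ℝ)..φb, h χ) - (∫ χ in (0:ℝ)..φa, h χ) = ∫ χ in φa..φb, h χ
    exact intervalIntegral.integral_interval_sub_left hint1 hint2
  rw [hFd, intervalIntegral.integral_of_le hab, intervalIntegral.integral_of_le hφaφb,
    MeasureTheory.integral_Ioc_eq_integral_Ioo, MeasureTheory.integral_Ioc_eq_integral_Ioo,
    ← himage,
    MeasureTheory.integral_image_eq_integral_abs_deriv_smul measurableSet_Ioo hderiv hinj,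
    MeasureTheory.setIntegral_congr_fun measurableSet_Ioo hpoint,
    MeasureTheory.integral_const_mul]
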